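/- One has the ideal equality (v1·I_{W1}) ∩ (h1^{m11} h2^{m21}·(h1,v2)^{(m12−m11)_+}) = v1 h1^{m11} h2^{m21}·(h1,v2)^{(m12−m11)_+}, where for a polynomial f and an ideal I, f·I denotes the ideal of all multiples of elements of I by f. -/

import Mathlib

open MvPolynomial

namespace FatThree

variable {k : Type*} [Field k]

/-- weight of a monomial -/
def wt (w : Fin 4 → ℕ) (m : Fin 4 →₀ ℕ) : ℕ := ∑ i : Fin 4, m i * w i

lemma wt_add (w : Fin 4 → ℕ) (a b : Fin 4 →₀ ℕ) : wt w (a + b) = wt w a + wt w b := by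
  simp [wt, add_mul, Finset.sum_add_distrib]

lemma wt_single (w : Fin 4 → ℕ) (l : Fin 4) (e : ℕ) :
    wt w (Finsupp.single l e) = e * w l := by
  simp [wt, Finsupp.single_apply]

/-- the ideal of polynomials all of whose monomials have weight ≥ n -/
def wtId (w : Fin 4 → ℕ) (n : ℕ) : Ideal (MvPolynomial (Fin 4) k) where
  carrier := {f | ∀ m ∈ f.support, n ≤ wt w m}
  zero_mem' := by simp
  add_mem' := by
    intro p q hp hq m hm
    rcases Finset.mem_union.mp (MvPolynomial.support_add hm) with h | h
    exacts [hp m h, hq m h]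
  smul_mem' := by
    intro c f hf m hm
    rw [smul_eq_mul] at hm
    obtain ⟨x, hx, y, hy, rfl⟩ := Finset.mem_add.mp (MvPolynomial.support_mul c f hm)
    rw [wt_add]
    exact (hf y hy).trans (Nat.le_add_left _ _)

lemma mem_wtId {w : Fin 4 → ℕ} {n : ℕ} {f : MvPolynomial (Fin 4) k} :
    f ∈ wtId w n ↔ ∀ m ∈ f.support, n ≤ wt w m := Iff.rfl

lemma wtId_mul_le (w : Fin 4 → ℕ) (a b : ℕ) :
    (wtId w a : Ideal (MvPolynomial (Fin 4) k)) * wtId w b ≤ wtId w (a + b) := by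
  rw [Ideal.mul_le]
  intro p hp q hq m hm
  obtain ⟨x, hx, y, hy, rfl⟩ := Finset.mem_add.mp (MvPolynomial.support_mul p q hm)
  rw [wt_add]
  exact Nat.add_le_add (hp x hx) (hq y hy)

lemma span_pair_le_wtId (i j : Fin 4) (w : Fin 4 → ℕ) (hi : 1 ≤ w i) (hj : 1 ≤ w j) :
    Ideal.span {X i, X j} ≤ wtId (k := k) w 1 := by
  rw [Ideal.span_le]
  rintro x (rfl | rfl) <;>
  · intro m hm
    rw [MvPolynomial.support_X, Finset.mem_singleton] at hm
    subst hm
    rw [wt_single, one_mul]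
    assumption

lemma span_pair_pow_le_wtId (i j : Fin 4) (w : Fin 4 → ℕ) (hi : 1 ≤ w i) (hj : 1 ≤ w j)
    (n : ℕ) : Ideal.span {X i, X j} ^ n ≤ wtId (k := k) w n := by
  induction n with
  | zero => exact fun f _ m _ => Nat.zero_le _
  | succ n ih =>
    rw [pow_succ]
    exact le_trans (Ideal.mul_mono ih (span_pair_le_wtId i j w hi hj))
      (le_of_le_of_eq (wtId_mul_le w n 1) rfl)

lemma monomial_mem_span_pair_pow (i j : Fin 4) (w : Fin 4 → ℕ)
    (hw : ∀ l, w l ≠ 0 → l = i ∨ l = j) (hw1 : ∀ l, w l ≤ 1) :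
    ∀ (n : ℕ) (m : Fin 4 →₀ ℕ) (c : k), n ≤ wt w m →
      monomial m c ∈ Ideal.span {X i, X j} ^ n := by
  intro n
  induction n with
  | zero => intro m c _; simp
  | succ n ih =>
    intro m c hn
    have hex : ∃ l, 1 ≤ m l * w l := by
      by_contra h
      push_neg at h
      have : wt w m = 0 := Finset.sum_eq_zero fun l _ => by have := h l; omega
      omega
    obtain ⟨l, hl⟩ := hex
    have hml : 1 ≤ m l := by by_contra h; push_neg at h; interval_cases hml : m l <;> simp_all
    have hwl0 : w l ≠ 0 := by intro h; rw [h, mul_zero] at hl; omega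
    have hwl : w l = 1 := le_antisymm (hw1 l) (Nat.one_le_iff_ne_zero.mpr hwl0)
    have hm' : (m - Finsupp.single l 1) + Finsupp.single l 1 = m := by
      ext x
      rcases eq_or_ne x l with rfl | h
      · simp only [Finsupp.add_apply, Finsupp.tsub_apply, Finsupp.single_eq_same]
        omega
      · simp [Finsupp.single_apply, Ne.symm h, h]
    have hwt : n ≤ wt w (m - Finsupp.single l 1) := by
      have := wt_add w (m - Finsupp.single l 1) (Finsupp.single l 1)
      rw [hm', wt_single, hwl] at this
      omega
    have hXl : X l ∈ Ideal.span ({X i, X j} : Set (MvPolynomial (Fin 4) k)) := by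
      rcases hw l hwl0 with rfl | rfl
      · exact Ideal.subset_span (Set.mem_insert _ _)
      · exact Ideal.subset_span (Set.mem_insert_iff.mpr (Or.inr rfl))
    have heq : monomial m c = monomial (m - Finsupp.single l 1) c * X l := by
      rw [show (X l : MvPolynomial (Fin 4) k) = monomial (Finsupp.single l 1) 1 by
        rw [← X_pow_eq_monomial, pow_one], monomial_mul, hm', mul_one]
    rw [heq, pow_succ]
    exact Ideal.mul_mem_mul (ih _ c hwt) hXl

lemma wtId_le_span_pair_pow (i j : Fin 4) (w : Fin 4 → ℕ)
    (hw : ∀ l, w l ≠ 0 → l = i ∨ l = j) (hw1 : ∀ l, w l ≤ 1) (n : ℕ) :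
    wtId (k := k) w n ≤ Ideal.span {X i, X j} ^ n := by
  intro f hf
  rw [f.as_sum]
  exact Ideal.sum_mem _ fun m hm => monomial_mem_span_pair_pow i j w hw hw1 n m _ (hf m hm)

lemma mem_span_pair_pow_iff (i j : Fin 4) (w : Fin 4 → ℕ)
    (hw : ∀ l, w l ≠ 0 → l = i ∨ l = j) (hwi : w i = 1) (hwj : w j = 1) (hw1 : ∀ l, w l ≤ 1)
    (n : ℕ) (f : MvPolynomial (Fin 4) k) :
    f ∈ Ideal.span {X i, X j} ^ n ↔ ∀ m ∈ f.support, n ≤ wt w m :=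
  ⟨fun h => span_pair_pow_le_wtId i j w hwi.ge hwj.ge n h,
   fun h => wtId_le_span_pair_pow i j w hw hw1 n h⟩

lemma mem_I03_pow (n : ℕ) (f : MvPolynomial (Fin 4) k) :
    f ∈ (Ideal.span {X 0, X 3} : Ideal (MvPolynomial (Fin 4) k)) ^ n ↔
      ∀ m ∈ f.support, n ≤ m 0 + m 3 := by
  rw [mem_span_pair_pow_iff 0 3 ![1,0,0,1] (by decide) rfl rfl (by decide)]
  have : ∀ m : Fin 4 →₀ ℕ, wt ![1,0,0,1] m = m 0 + m 3 := by
    intro m; simp [wt, Fin.sum_univ_four]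
  simp only [this]

lemma mem_X2_iff (f : MvPolynomial (Fin 4) k) :
    f ∈ Ideal.span {(X 2 : MvPolynomial (Fin 4) k)} ↔ ∀ m ∈ f.support, 1 ≤ m 2 := by
  have hs : ({(X 2 : MvPolynomial (Fin 4) k)} : Set _) = {X 2, X 2} := by simp
  rw [hs, ← pow_one (Ideal.span ({X 2, X 2} : Set (MvPolynomial (Fin 4) k))),
    mem_span_pair_pow_iff 2 2 ![0,0,1,0] (by decide) rfl rfl (by decide)]
  have : ∀ m : Fin 4 →₀ ℕ, wt ![0,0,1,0] m = m 2 := by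
    intro m; simp [wt, Fin.sum_univ_four]
  simp only [this]

lemma mono_key (a b n : ℕ) :
    Ideal.span {(X 2 : MvPolynomial (Fin 4) k)} ⊓
        (Ideal.span {X 0 ^ a * X 1 ^ b} * Ideal.span {X 0, X 3} ^ n) ≤
      Ideal.span {X 2 * X 0 ^ a * X 1 ^ b} * Ideal.span {X 0, X 3} ^ n := by
  rintro f ⟨hf2, hfc⟩
  obtain ⟨g, hg, hfg⟩ := Ideal.mem_span_singleton_mul.mp hfc
  have hc : (X 0 ^ a * X 1 ^ b : MvPolynomial (Fin 4) k) =
      monomial (Finsupp.single 0 a + Finsupp.single 1 b) 1 := by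
    rw [X_pow_eq_monomial, X_pow_eq_monomial, monomial_mul, mul_one]
  set s : Fin 4 →₀ ℕ := Finsupp.single 0 a + Finsupp.single 1 b with hs
  have hsup : ∀ m ∈ g.support, s + m ∈ f.support := by
    intro m hm
    rw [mem_support_iff] at hm ⊢
    rw [← hfg, hc, coeff_monomial_mul, one_mul]
    exact hm
  have hg2 : g ∈ Ideal.span {(X 2 : MvPolynomial (Fin 4) k)} := by
    rw [mem_X2_iff]
    intro m hm
    have h1 := (mem_X2_iff f).mp hf2 _ (hsup m hm)
    have hs2 : s 2 = 0 := by simp [hs, Finsupp.single_apply]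
    simpa [Finsupp.add_apply, hs2] using h1
  obtain ⟨g', hgg'⟩ := Ideal.mem_span_singleton.mp hg2
  have hX2 : (X 2 : MvPolynomial (Fin 4) k) = monomial (Finsupp.single 2 1) 1 := by
    rw [← X_pow_eq_monomial, pow_one]
  have hg'J : g' ∈ (Ideal.span {X 0, X 3} : Ideal (MvPolynomial (Fin 4) k)) ^ n := by
    rw [mem_I03_pow]
    intro m hm
    have hsm : Finsupp.single 2 1 + m ∈ g.support := by
      rw [mem_support_iff] at hm ⊢
      rw [hgg', hX2, coeff_monomial_mul, one_mul]
      exact hm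
    have h1 := (mem_I03_pow n g).mp hg _ hsm
    simpa [Finsupp.add_apply, Finsupp.single_apply] using h1
  refine Ideal.mem_span_singleton_mul.mpr ⟨g', hg'J, ?_⟩
  rw [← hfg, hgg']
  ring

/-- inverting a 2x2 base change inside the span of two linearly independent vectors -/
lemma exists_inverse_coords {M : Type*} [AddCommGroup M] [Module k M]
    {x0 x1 h1 h2 : M} (hind : LinearIndependent k ![h1, h2])
    {c11 c12 c21 c22 : k} (hc1 : c11 • x0 + c12 • x1 = h1) (hc2 : c21 • x0 + c22 • x1 = h2) :
    ∃ a11 a12 a21 a22 : k,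
      (a11 • h1 + a12 • h2 = x0) ∧ (a21 • h1 + a22 • h2 = x1) ∧
      (c11 * a11 + c12 * a21 = 1) ∧ (c11 * a12 + c12 * a22 = 0) ∧
      (c21 * a11 + c22 * a21 = 0) ∧ (c21 * a12 + c22 * a22 = 1) := by
  have hpair := LinearIndependent.pair_iff.mp hind
  have hdet : c11 * c22 - c12 * c21 ≠ 0 := by
    intro hdet
    have h0 : c22 • h1 + (-c12) • h2 = 0 := by
      rw [← hc1, ← hc2]
      match_scalars
      · linear_combination hdet
      · ring
    obtain ⟨e1, e2⟩ := hpair _ _ h0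
    rw [neg_eq_zero] at e2
    have h0' : c21 • h1 + (-c11) • h2 = 0 := by
      rw [← hc1, ← hc2]
      match_scalars
      · ring
      · linear_combination c21 * e2 - c11 * e1
    obtain ⟨f1, f2⟩ := hpair _ _ h0'
    rw [neg_eq_zero] at f2
    have hz : (1 : k) • h1 + (0 : k) • h2 = 0 := by
      rw [← hc1, ← hc2, f2, e2]
      match_scalars <;> ring
    exact one_ne_zero (hpair _ _ hz).1
  refine ⟨c22 / (c11 * c22 - c12 * c21), -c12 / (c11 * c22 - c12 * c21),
    -c21 / (c11 * c22 - c12 * c21), c11 / (c11 * c22 - c12 * c21), ?_, ?_, ?_, ?_, ?_, ?_⟩ <;>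
    first
      | (rw [← hc1, ← hc2]; match_scalars <;> (first | ring1 | linear_combination mul_inv_cancel₀ hdet))
      | (first | ring1 | linear_combination mul_inv_cancel₀ hdet)

lemma exists_equiv (h1 h2 v1 v2 : MvPolynomial (Fin 4) k)
    (hh1 : h1 ∈ Submodule.span k ({X 0, X 1} : Set (MvPolynomial (Fin 4) k)))
    (hh2 : h2 ∈ Submodule.span k ({X 0, X 1} : Set (MvPolynomial (Fin 4) k)))
    (hhind : LinearIndependent k ![h1, h2])
    (hv1 : v1 ∈ Submodule.span k ({X 2, X 3} : Set (MvPolynomial (Fin 4) k)))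
    (hv2 : v2 ∈ Submodule.span k ({X 2, X 3} : Set (MvPolynomial (Fin 4) k)))
    (hvind : LinearIndependent k ![v1, v2]) :
    ∃ e : MvPolynomial (Fin 4) k ≃ₐ[k] MvPolynomial (Fin 4) k,
      e (X 0) = h1 ∧ e (X 1) = h2 ∧ e (X 2) = v1 ∧ e (X 3) = v2 := by
  obtain ⟨c11, c12, hc1⟩ := Submodule.mem_span_pair.mp hh1
  obtain ⟨c21, c22, hc2⟩ := Submodule.mem_span_pair.mp hh2
  obtain ⟨d11, d12, hd1⟩ := Submodule.mem_span_pair.mp hv1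
  obtain ⟨d21, d22, hd2⟩ := Submodule.mem_span_pair.mp hv2
  obtain ⟨a11, a12, a21, a22, ha0, ha1, hca1, hca2, hca3, hca4⟩ :=
    exists_inverse_coords hhind hc1 hc2
  obtain ⟨b11, b12, b21, b22, hb0, hb1, hdb1, hdb2, hdb3, hdb4⟩ :=
    exists_inverse_coords hvind hd1 hd2
  set F : MvPolynomial (Fin 4) k →ₐ[k] MvPolynomial (Fin 4) k := aeval ![h1, h2, v1, v2]
    with hF
  set G : MvPolynomial (Fin 4) k →ₐ[k] MvPolynomial (Fin 4) k :=
    aeval ![a11 • X 0 + a12 • X 1, a21 • X 0 + a22 • X 1,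
      b11 • X 2 + b12 • X 3, b21 • X 2 + b22 • X 3] with hG
  have hFX : F (X 0) = h1 ∧ F (X 1) = h2 ∧ F (X 2) = v1 ∧ F (X 3) = v2 := by
    refine ⟨?_, ?_, ?_, ?_⟩ <;> simp [hF]
  have hFG : F.comp G = AlgHom.id k (MvPolynomial (Fin 4) k) := by
    apply MvPolynomial.algHom_ext
    intro i
    fin_cases i <;>
      simp [hF, hG, map_add, map_smul] <;>
      first
        | exact ha0 | exact ha1 | exact hb0 | exact hb1
  have hcomp0 : G (F (X 0)) = X 0 := by
    rw [hFX.1, ← hc1, map_add, map_smul, map_smul]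
    simp only [hG, aeval_X, Matrix.cons_val_zero, Matrix.cons_val_one, Matrix.head_cons]
    match_scalars
    · linear_combination hca1
    · linear_combination hca2
  have hcomp1 : G (F (X 1)) = X 1 := by
    rw [hFX.2.1, ← hc2, map_add, map_smul, map_smul]
    simp only [hG, aeval_X, Matrix.cons_val_zero, Matrix.cons_val_one, Matrix.head_cons]
    match_scalars
    · linear_combination hca3
    · linear_combination hca4
  have hcomp2 : G (F (X 2)) = X 2 := by
    rw [hFX.2.2.1, ← hd1, map_add, map_smul, map_smul]
    simp only [hG, aeval_X, Matrix.cons_val]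
    match_scalars
    · linear_combination hdb1
    · linear_combination hdb2
  have hcomp3 : G (F (X 3)) = X 3 := by
    rw [hFX.2.2.2, ← hd2, map_add, map_smul, map_smul]
    simp only [hG, aeval_X, Matrix.cons_val]
    match_scalars
    · linear_combination hdb3
    · linear_combination hdb4
  have hGF : G.comp F = AlgHom.id k (MvPolynomial (Fin 4) k) := by
    apply MvPolynomial.algHom_ext
    intro i
    fin_cases i <;> simp only [AlgHom.comp_apply, AlgHom.id_apply]
    · exact hcomp0
    · exact hcomp1
    · exact hcomp2
    · exact hcomp3
  exact ⟨AlgEquiv.ofAlgHom F G hFG hGF, hFX.1, hFX.2.1, hFX.2.2.1, hFX.2.2.2⟩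

lemma map_inf_equiv {R S : Type*} [CommRing R] [CommRing S] (f : R ≃+* S) (I J : Ideal R) :
    Ideal.map f (I ⊓ J) = Ideal.map f I ⊓ Ideal.map f J := by
  simp only [← Ideal.comap_symm, Ideal.comap_inf]

end FatThree

/-- Proposition 2.9: the intersection
`(v1·I_{W1}) ∩ (h1^{m11} h2^{m21}·(h1,v2)^{(m12-m11)_+}) = v1 h1^{m11} h2^{m21}·(h1,v2)^{(m12-m11)_+}`. -/
theorem fat_three_points_intersection
    {k : Type*} [Field k]
    (h1 h2 v1 v2 : MvPolynomial (Fin 4) k)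
    (hh1 : h1 ∈ Submodule.span k ({X 0, X 1} : Set (MvPolynomial (Fin 4) k)))
    (hh2 : h2 ∈ Submodule.span k ({X 0, X 1} : Set (MvPolynomial (Fin 4) k)))
    (hhind : LinearIndependent k ![h1, h2])
    (hv1 : v1 ∈ Submodule.span k ({X 2, X 3} : Set (MvPolynomial (Fin 4) k)))
    (hv2 : v2 ∈ Submodule.span k ({X 2, X 3} : Set (MvPolynomial (Fin 4) k)))
    (hvind : LinearIndependent k ![v1, v2])
    (m11 m12 m21 : ℕ) (hm : m21 ≤ m12)
    (IW IW1 : Ideal (MvPolynomial (Fin 4) k))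
    (hIW : IW = Ideal.span {h1, v1} ^ m11 ⊓ Ideal.span {h1, v2} ^ m12 ⊓
        Ideal.span {h2, v1} ^ m21)
    (hIW1 : IW1 = Ideal.span {h1, v1} ^ (m11 - 1) ⊓ Ideal.span {h1, v2} ^ m12 ⊓
        Ideal.span {h2, v1} ^ (m21 - 1)) :
    (Ideal.span {v1} * IW1) ⊓
        (Ideal.span {h1 ^ m11 * h2 ^ m21} * Ideal.span {h1, v2} ^ (m12 - m11)) =
      Ideal.span {v1 * h1 ^ m11 * h2 ^ m21} * Ideal.span {h1, v2} ^ (m12 - m11) := by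
  obtain ⟨e, e0, e1, e2, e3⟩ := FatThree.exists_equiv h1 h2 v1 v2 hh1 hh2 hhind hv1 hv2 hvind
  set E : MvPolynomial (Fin 4) k ≃+* MvPolynomial (Fin 4) k := e.toRingEquiv with hE
  have hE0 : E (X 0) = h1 := e0
  have hE1 : E (X 1) = h2 := e1
  have hE2 : E (X 2) = v1 := e2
  have hE3 : E (X 3) = v2 := e3
  have hJ : Ideal.map E ((Ideal.span {X 0, X 3} : Ideal (MvPolynomial (Fin 4) k)) ^ (m12 - m11))
      = Ideal.span {h1, v2} ^ (m12 - m11) := by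
    rw [Ideal.map_pow, Ideal.map_span, Set.image_pair, hE0, hE3]
  have hX2 : Ideal.map E (Ideal.span {(X 2 : MvPolynomial (Fin 4) k)}) = Ideal.span {v1} := by
    rw [Ideal.map_span, Set.image_singleton, hE2]
  have hc : Ideal.map E (Ideal.span {(X 0 ^ m11 * X 1 ^ m21 : MvPolynomial (Fin 4) k)})
      = Ideal.span {h1 ^ m11 * h2 ^ m21} := by
    rw [Ideal.map_span, Set.image_singleton, map_mul, map_pow, map_pow, hE0, hE1]
  have hvc : Ideal.map E (Ideal.span {(X 2 * X 0 ^ m11 * X 1 ^ m21 : MvPolynomial (Fin 4) k)})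
      = Ideal.span {v1 * h1 ^ m11 * h2 ^ m21} := by
    rw [Ideal.map_span, Set.image_singleton, map_mul, map_mul, map_pow, map_pow, hE0, hE1, hE2]
  have key : Ideal.span {v1} ⊓
      (Ideal.span {h1 ^ m11 * h2 ^ m21} * Ideal.span {h1, v2} ^ (m12 - m11)) ≤
      Ideal.span {v1 * h1 ^ m11 * h2 ^ m21} * Ideal.span {h1, v2} ^ (m12 - m11) := by
    have hmap := Ideal.map_mono (f := E) (FatThree.mono_key (k := k) m11 m21 (m12 - m11))
    rwa [FatThree.map_inf_equiv, Ideal.map_mul, Ideal.map_mul, hJ, hX2, hc, hvc] at hmap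
  refine le_antisymm (le_trans (inf_le_inf_right _ Ideal.mul_le_left) key) ?_
  subst hIW1
  refine le_inf ?_ ?_
  · have hsplit : Ideal.span {v1 * h1 ^ m11 * h2 ^ m21} =
        Ideal.span {v1} * Ideal.span {h1 ^ m11 * h2 ^ m21} := by
      rw [Ideal.span_singleton_mul_span_singleton, mul_assoc]
    rw [hsplit, mul_assoc]
    refine Ideal.mul_mono_right (le_inf (le_inf ?_ ?_) ?_)
    · refine le_trans Ideal.mul_le_left ?_
      rw [Ideal.span_le, Set.singleton_subset_iff]
      exact Ideal.pow_le_pow_right (Nat.sub_le m11 1)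
        (Ideal.mul_mem_right _ _
          (Ideal.pow_mem_pow (Ideal.subset_span (Set.mem_insert _ _)) m11))
    · rcases le_or_gt m11 m12 with h | h
      · have hcle : Ideal.span {h1 ^ m11 * h2 ^ m21} ≤ Ideal.span {h1, v2} ^ m11 := by
          rw [Ideal.span_le, Set.singleton_subset_iff]
          exact Ideal.mul_mem_right _ _
            (Ideal.pow_mem_pow (Ideal.subset_span (Set.mem_insert _ _)) m11)
        refine le_trans (Ideal.mul_mono hcle le_rfl) ?_
        rw [← pow_add]
        exact le_of_eq (by congr 1; omega)
      · rw [Nat.sub_eq_zero_of_le h.le, pow_zero, mul_one, Ideal.span_le,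
          Set.singleton_subset_iff]
        exact Ideal.pow_le_pow_right h.le
          (Ideal.mul_mem_right _ _
            (Ideal.pow_mem_pow (Ideal.subset_span (Set.mem_insert _ _)) m11))
    · refine le_trans Ideal.mul_le_left ?_
      rw [Ideal.span_le, Set.singleton_subset_iff]
      exact Ideal.pow_le_pow_right (Nat.sub_le m21 1)
        (Ideal.mul_mem_left _ _
          (Ideal.pow_mem_pow (Ideal.subset_span (Set.mem_insert _ _)) m21))
  · refine Ideal.mul_mono ?_ le_rfl
    rw [Ideal.span_le, Set.singleton_subset_iff]
    exact Ideal.mem_span_singleton.mpr ⟨v1, by ring⟩
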